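/- For the Dirichlet distribution with parameters α₁,…,α_K > 0, the loglikelihood for n i.i.d. observations is strictly concave on the parameter space {α ∈ ℝᴷ : αₖ > 0 for all k} provided n ≥ 1. -/

import Mathlib

open Real MeasureTheory Set intervalIntegral

noncomputable def Bfun (a b : ℝ) : ℝ → ℝ := fun x => x ^ (a - 1) * (1 - x) ^ (b - 1)

noncomputable def Bint (a b : ℝ) : ℝ := ∫ x in (0:ℝ)..1, Bfun a b x

lemma Bfun_pos {a b : ℝ} {x : ℝ} (hx : x ∈ Set.Ioo (0:ℝ) 1) : 0 < Bfun a b x :=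
  mul_pos (rpow_pos_of_pos hx.1 _) (rpow_pos_of_pos (by linarith [hx.2]) _)

lemma Bfun_integrable {a b : ℝ} (ha : 0 < a) (hb : 0 < b) :
    IntervalIntegrable (Bfun a b) volume 0 1 := by
  have hc := Complex.betaIntegral_convergent (u := (a:ℂ)) (v := (b:ℂ)) (by simpa) (by simpa)
  rw [intervalIntegrable_iff_integrableOn_Ioc_of_le zero_le_one] at hc ⊢
  refine (hc.re).congr ?_
  refine (ae_restrict_iff' measurableSet_Ioc).2 (ae_of_all _ fun x hx => ?_)
  have hx0 : (0:ℝ) ≤ x := hx.1.le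
  have h1x : (0:ℝ) ≤ 1 - x := by linarith [hx.2]
  show RCLike.re ((x:ℂ) ^ ((a:ℂ) - 1) * (1 - (x:ℂ)) ^ ((b:ℂ) - 1)) = Bfun a b x
  rw [show ((a:ℂ) - 1) = ((a - 1 : ℝ) : ℂ) by push_cast; ring,
    show ((b:ℂ) - 1) = ((b - 1 : ℝ) : ℂ) by push_cast; ring,
    show (1 - (x:ℂ)) = ((1 - x : ℝ) : ℂ) by push_cast; ring,
    ← Complex.ofReal_cpow hx0, ← Complex.ofReal_cpow h1x, ← Complex.ofReal_mul]
  simp [Bfun]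

lemma Gamma_beta {a b : ℝ} (ha : 0 < a) (hb : 0 < b) :
    Real.Gamma a * Real.Gamma b = Real.Gamma (a + b) * Bint a b := by
  have h := Complex.Gamma_mul_Gamma_eq_betaIntegral (s := (a:ℂ)) (t := (b:ℂ))
    (by simpa) (by simpa)
  have hbeta : Complex.betaIntegral (a:ℂ) (b:ℂ) = ((Bint a b : ℝ) : ℂ) := by
    rw [Complex.betaIntegral, Bint, ← intervalIntegral.integral_ofReal]
    refine intervalIntegral.integral_congr fun x hx => ?_
    rw [uIcc_of_le zero_le_one] at hx
    have hx0 : (0:ℝ) ≤ x := hx.1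
    have h1x : (0:ℝ) ≤ 1 - x := by linarith [hx.2]
    rw [show ((a:ℂ) - 1) = ((a - 1 : ℝ) : ℂ) by push_cast; ring,
      show ((b:ℂ) - 1) = ((b - 1 : ℝ) : ℂ) by push_cast; ring,
      show (1 - (x:ℂ)) = ((1 - x : ℝ) : ℂ) by push_cast; ring,
      ← Complex.ofReal_cpow hx0, ← Complex.ofReal_cpow h1x, ← Complex.ofReal_mul]
    rfl
  rw [hbeta, show ((a:ℂ) + (b:ℂ)) = ((a + b : ℝ) : ℂ) by push_cast; ring] at h
  rw [Complex.Gamma_ofReal, Complex.Gamma_ofReal, Complex.Gamma_ofReal] at h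
  exact_mod_cast h

lemma Bint_pos {a b : ℝ} (ha : 0 < a) (hb : 0 < b) : 0 < Bint a b :=
  intervalIntegral_pos_of_pos_on (Bfun_integrable ha hb) (fun x hx => Bfun_pos hx)
    zero_lt_one

lemma log_Bint {a b : ℝ} (ha : 0 < a) (hb : 0 < b) :
    Real.log (Bint a b) =
      Real.log (Real.Gamma a) + Real.log (Real.Gamma b) - Real.log (Real.Gamma (a + b)) := by
  have h1 : Real.Gamma a ≠ 0 := (Real.Gamma_pos_of_pos ha).ne'
  have h2 : Real.Gamma b ≠ 0 := (Real.Gamma_pos_of_pos hb).ne'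
  have h3 : Real.Gamma (a + b) ≠ 0 := (Real.Gamma_pos_of_pos (by linarith)).ne'
  have : Bint a b = Real.Gamma a * Real.Gamma b / Real.Gamma (a + b) := by
    field_simp [Gamma_beta ha hb]
    rw [Gamma_beta ha hb]; ring
  rw [this, Real.log_div (by positivity) h3, Real.log_mul h1 h2]

lemma Bint_strict {a₁ b₁ a₂ b₂ t s : ℝ} (ha₁ : 0 < a₁) (hb₁ : 0 < b₁) (ha₂ : 0 < a₂)
    (hb₂ : 0 < b₂) (ht : 0 < t) (hs : 0 < s) (hts : t + s = 1)
    (hne : ¬(a₁ = a₂ ∧ b₁ = b₂)) :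
    Bint (t*a₁+s*a₂) (t*b₁+s*b₂) < Bint a₁ b₁ ^ t * Bint a₂ b₂ ^ s := by
  have ham : 0 < t*a₁+s*a₂ := by positivity
  have hbm : 0 < t*b₁+s*b₂ := by positivity
  have hB₁ : 0 < Bint a₁ b₁ := Bint_pos ha₁ hb₁
  have hB₂ : 0 < Bint a₂ b₂ := Bint_pos ha₂ hb₂
  set B₁ := Bint a₁ b₁ with hB₁def
  set B₂ := Bint a₂ b₂ with hB₂def
  set c := B₁ ^ t * B₂ ^ s with hcdef
  have hc : 0 < c := by positivity
  set g : ℝ → ℝ := fun x => (c*t/B₁) * Bfun a₁ b₁ x + (c*s/B₂) * Bfun a₂ b₂ x with hgdef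
  have hfmi := Bfun_integrable ham hbm
  have hgi : IntervalIntegrable g volume 0 1 :=
    ((Bfun_integrable ha₁ hb₁).const_mul _).add ((Bfun_integrable ha₂ hb₂).const_mul _)
  have intg : (∫ x in (0:ℝ)..1, g x) = c := by
    rw [hgdef]
    rw [intervalIntegral.integral_add ((Bfun_integrable ha₁ hb₁).const_mul _)
      ((Bfun_integrable ha₂ hb₂).const_mul _), intervalIntegral.integral_const_mul,
      intervalIntegral.integral_const_mul]
    show c*t/B₁ * Bint a₁ b₁ + c*s/B₂ * Bint a₂ b₂ = c
    field_simp
    linear_combination (Bint a₁ b₁ * B₂) * hts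
  -- pointwise decomposition
  have hdecomp : ∀ x ∈ Set.Ioo (0:ℝ) 1, Bfun (t*a₁+s*a₂) (t*b₁+s*b₂) x
      = c * ((Bfun a₁ b₁ x / B₁) ^ t * (Bfun a₂ b₂ x / B₂) ^ s) := by
    intro x hx
    have hx0 : 0 < x := hx.1
    have h1x : 0 < 1 - x := by linarith [hx.2]
    have e : ∀ (z : ℝ), 0 < z → ∀ p q : ℝ, z ^ (t*p + s*q) = (z^p)^t * (z^q)^s := by
      intro z hz p q
      rw [rpow_add hz, mul_comm t p, mul_comm s q, rpow_mul hz.le, rpow_mul hz.le]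
    have hf₁ : 0 < Bfun a₁ b₁ x := Bfun_pos hx
    have hf₂ : 0 < Bfun a₂ b₂ x := Bfun_pos hx
    have key : Bfun (t*a₁+s*a₂) (t*b₁+s*b₂) x = (Bfun a₁ b₁ x) ^ t * (Bfun a₂ b₂ x) ^ s := by
      show x ^ (t*a₁+s*a₂ - 1) * (1-x) ^ (t*b₁+s*b₂ - 1) = _
      rw [show t*a₁+s*a₂ - 1 = t*(a₁-1) + s*(a₂-1) by linarith,
        show t*b₁+s*b₂ - 1 = t*(b₁-1) + s*(b₂-1) by linarith,
        e x hx0 (a₁-1) (a₂-1), e (1-x) h1x (b₁-1) (b₂-1)]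
      show _ = (x ^ (a₁-1) * (1-x) ^ (b₁-1)) ^ t * (x ^ (a₂-1) * (1-x) ^ (b₂-1)) ^ s
      rw [mul_rpow (rpow_nonneg hx0.le _) (rpow_nonneg h1x.le _),
        mul_rpow (rpow_nonneg hx0.le _) (rpow_nonneg h1x.le _)]
      ring
    rw [key, div_rpow hf₁.le hB₁.le, div_rpow hf₂.le hB₂.le, hcdef]
    field_simp
  have hgform : ∀ x : ℝ, g x = c * (t * (Bfun a₁ b₁ x / B₁) + s * (Bfun a₂ b₂ x / B₂)) := by
    intro x; rw [hgdef]; field_simp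
  have hle : ∀ x ∈ Set.Ioo (0:ℝ) 1, Bfun (t*a₁+s*a₂) (t*b₁+s*b₂) x ≤ g x := by
    intro x hx
    rw [hdecomp x hx, hgform x]
    have hu : 0 ≤ Bfun a₁ b₁ x / B₁ := div_nonneg (Bfun_pos hx).le hB₁.le
    have hv : 0 ≤ Bfun a₂ b₂ x / B₂ := div_nonneg (Bfun_pos hx).le hB₂.le
    exact mul_le_mul_of_nonneg_left
      (Real.geom_mean_le_arith_mean2_weighted ht.le hs.le hu hv hts) hc.le
  have hle_ae : (fun x => Bfun (t*a₁+s*a₂) (t*b₁+s*b₂) x) ≤ᵐ[volume.restrict (Set.Ioc (0:ℝ) 1)] g := by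
    rw [← Measure.restrict_congr_set Ioo_ae_eq_Ioc]
    exact (ae_restrict_iff' measurableSet_Ioo).2 (Filter.Eventually.of_forall hle)
  -- find the strict point
  obtain ⟨x₀, hx₀I, hx₀ne⟩ : ∃ x₀ ∈ Set.Ioo (0:ℝ) 1,
      Bfun a₁ b₁ x₀ / B₁ ≠ Bfun a₂ b₂ x₀ / B₂ := by
    by_contra h
    push_neg at h
    have key : ∀ x : ℝ, 0 < x → x < 1 →
        (a₁ - a₂) * Real.log x + (b₁ - b₂) * Real.log (1-x) = Real.log B₁ - Real.log B₂ := by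
      intro x hx0 hx1
      have hmem : x ∈ Set.Ioo (0:ℝ) 1 := ⟨hx0, hx1⟩
      have h1x : 0 < 1 - x := by linarith
      have hf₁ : 0 < Bfun a₁ b₁ x := Bfun_pos hmem
      have hf₂ : 0 < Bfun a₂ b₂ x := Bfun_pos hmem
      have heq := h x hmem
      have hlogeq : Real.log (Bfun a₁ b₁ x) - Real.log B₁
          = Real.log (Bfun a₂ b₂ x) - Real.log B₂ := by
        rw [← Real.log_div hf₁.ne' hB₁.ne', ← Real.log_div hf₂.ne' hB₂.ne', heq]
      have l₁ : Real.log (Bfun a₁ b₁ x) = (a₁-1) * Real.log x + (b₁-1) * Real.log (1-x) := by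
        show Real.log (x ^ (a₁-1) * (1-x) ^ (b₁-1)) = _
        rw [Real.log_mul (rpow_pos_of_pos hx0 _).ne' (rpow_pos_of_pos h1x _).ne',
          Real.log_rpow hx0, Real.log_rpow h1x]
      have l₂ : Real.log (Bfun a₂ b₂ x) = (a₂-1) * Real.log x + (b₂-1) * Real.log (1-x) := by
        show Real.log (x ^ (a₂-1) * (1-x) ^ (b₂-1)) = _
        rw [Real.log_mul (rpow_pos_of_pos hx0 _).ne' (rpow_pos_of_pos h1x _).ne',
          Real.log_rpow hx0, Real.log_rpow h1x]
      rw [l₁, l₂] at hlogeq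
      linarith
    have e1 := key (1/4) (by norm_num) (by norm_num)
    have e2 := key (1/2) (by norm_num) (by norm_num)
    have e3 := key (3/4) (by norm_num) (by norm_num)
    rw [show (1:ℝ) - 1/4 = 3/4 by norm_num] at e1
    rw [show (1:ℝ) - 1/2 = 1/2 by norm_num] at e2
    rw [show (1:ℝ) - 3/4 = 1/4 by norm_num] at e3
    have h13 : (a₁ - a₂ - (b₁ - b₂)) * (Real.log (1/4) - Real.log (3/4)) = 0 := by
      linear_combination e1 - e3
    have hl13 : Real.log (1/4 : ℝ) - Real.log (3/4 : ℝ) ≠ 0 :=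
      sub_ne_zero.2 (ne_of_lt (Real.log_lt_log (by norm_num) (by norm_num)))
    have hABd : a₁ - a₂ = b₁ - b₂ := by
      rcases mul_eq_zero.1 h13 with h' | h'
      · linarith [sub_eq_zero.1 h']
      · exact absurd h' hl13
    have hl2 : Real.log (1/4 : ℝ) = 2 * Real.log (1/2 : ℝ) := by
      rw [show (1/4:ℝ) = (1/2)^2 by norm_num, Real.log_pow]
      push_cast; ring
    have h2 : (a₁ - a₂ + (b₁ - b₂)) * (Real.log (1/4) + Real.log (3/4) - 2 * Real.log (1/2)) = 0 := by
      linear_combination e1 + e3 - 2 * e2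
    have hl3ne : Real.log (3/4 : ℝ) ≠ 0 := ne_of_lt (Real.log_neg (by norm_num) (by norm_num))
    have hsum0 : a₁ - a₂ + (b₁ - b₂) = 0 := by
      rcases mul_eq_zero.1 h2 with h' | h'
      · exact h'
      · rw [hl2] at h'
        exact absurd (by linarith : Real.log (3/4 : ℝ) = 0) hl3ne
    exact hne ⟨by linarith, by linarith⟩
  have hx0 : 0 < x₀ := hx₀I.1
  have h1x0 : 0 < 1 - x₀ := by linarith [hx₀I.2]
  -- strict inequality at x₀
  have hu : 0 < Bfun a₁ b₁ x₀ / B₁ := div_pos (Bfun_pos hx₀I) hB₁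
  have hv : 0 < Bfun a₂ b₂ x₀ / B₂ := div_pos (Bfun_pos hx₀I) hB₂
  have hstrict : (Bfun a₁ b₁ x₀ / B₁) ^ t * (Bfun a₂ b₂ x₀ / B₂) ^ s
      < t * (Bfun a₁ b₁ x₀ / B₁) + s * (Bfun a₂ b₂ x₀ / B₂) := by
    set u := Bfun a₁ b₁ x₀ / B₁
    set v := Bfun a₂ b₂ x₀ / B₂
    have hlog := strictConcaveOn_log_Ioi.2 (Set.mem_Ioi.2 hu) (Set.mem_Ioi.2 hv) hx₀ne ht hs hts
    simp only [smul_eq_mul] at hlog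
    calc u ^ t * v ^ s = Real.exp (t * Real.log u + s * Real.log v) := by
          rw [rpow_def_of_pos hu, rpow_def_of_pos hv, ← Real.exp_add]; ring_nf
      _ < Real.exp (Real.log (t * u + s * v)) := Real.exp_lt_exp.2 (by linarith)
      _ = t * u + s * v := Real.exp_log (add_pos (mul_pos ht hu) (mul_pos hs hv))
  have hfmlt : Bfun (t*a₁+s*a₂) (t*b₁+s*b₂) x₀ < g x₀ := by
    rw [hdecomp x₀ hx₀I, hgform x₀]
    exact mul_lt_mul_of_pos_left hstrict hc
  -- continuity
  have hcontBfun : ∀ p q : ℝ, ContinuousAt (Bfun p q) x₀ := by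
    intro p q
    have h1 : ContinuousAt (fun x : ℝ => x ^ (p-1)) x₀ :=
      Real.continuousAt_rpow_const _ _ (Or.inl hx0.ne')
    have h2 : ContinuousAt (fun x : ℝ => (1-x) ^ (q-1)) x₀ :=
      ContinuousAt.rpow_const (continuousAt_const.sub continuousAt_id)
        (Or.inl (by exact (by linarith : (0:ℝ) < 1 - x₀).ne'))
    exact h1.mul h2
  have hcg : ContinuousAt g x₀ := by
    rw [hgdef]
    exact (continuousAt_const.mul (hcontBfun a₁ b₁)).add
      (continuousAt_const.mul (hcontBfun a₂ b₂))
  have hev : ∀ᶠ x in nhds x₀,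
      Bfun (t*a₁+s*a₂) (t*b₁+s*b₂) x < g x ∧ x ∈ Set.Ioo (0:ℝ) 1 :=
    ((hcontBfun _ _).eventually_lt hcg hfmlt).and (isOpen_Ioo.eventually_mem hx₀I)
  obtain ⟨w, hw, hwo, hx₀w⟩ := eventually_nhds_iff.1 hev
  have hltset : volume.restrict (Set.Ioc (0:ℝ) 1)
      {x | Bfun (t*a₁+s*a₂) (t*b₁+s*b₂) x < g x} ≠ 0 := by
    rw [Measure.restrict_apply' measurableSet_Ioc]
    refine ((hwo.measure_pos volume ⟨x₀, hx₀w⟩).trans_le (measure_mono fun z hz => ?_)).ne'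
    exact ⟨(hw z hz).1, Set.Ioo_subset_Ioc_self (hw z hz).2⟩
  have final := intervalIntegral.integral_lt_integral_of_ae_le_of_measure_setOf_lt_ne_zero
    zero_le_one hfmi hgi hle_ae hltset
  calc Bint (t*a₁+s*a₂) (t*b₁+s*b₂) = ∫ x in (0:ℝ)..1, Bfun (t*a₁+s*a₂) (t*b₁+s*b₂) x := rfl
    _ < ∫ x in (0:ℝ)..1, g x := final
    _ = c := intg

lemma term_lt {p₁ q₁ p₂ q₂ a b : ℝ} (hp₁ : 0 < p₁) (hq₁ : 0 < q₁) (hp₂ : 0 < p₂)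
    (hq₂ : 0 < q₂) (ha : 0 < a) (hb : 0 < b) (hab : a + b = 1)
    (hne : ¬(p₁ = p₂ ∧ q₁ = q₂)) :
    Real.log (Real.Gamma (a*p₁+b*p₂)) + Real.log (Real.Gamma (a*q₁+b*q₂))
        - Real.log (Real.Gamma (a*p₁+b*p₂ + (a*q₁+b*q₂)))
      < a * (Real.log (Real.Gamma p₁) + Real.log (Real.Gamma q₁)
          - Real.log (Real.Gamma (p₁+q₁)))
        + b * (Real.log (Real.Gamma p₂) + Real.log (Real.Gamma q₂)
          - Real.log (Real.Gamma (p₂+q₂))) := by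
  have hpm : 0 < a*p₁+b*p₂ := by positivity
  have hqm : 0 < a*q₁+b*q₂ := by positivity
  rw [← log_Bint hp₁ hq₁, ← log_Bint hp₂ hq₂, ← log_Bint hpm hqm]
  have h := Bint_strict hp₁ hq₁ hp₂ hq₂ ha hb hab hne
  calc Real.log (Bint (a*p₁+b*p₂) (a*q₁+b*q₂))
      < Real.log (Bint p₁ q₁ ^ a * Bint p₂ q₂ ^ b) :=
        Real.log_lt_log (Bint_pos hpm hqm) h
    _ = a * Real.log (Bint p₁ q₁) + b * Real.log (Bint p₂ q₂) := by
        rw [Real.log_mul (rpow_pos_of_pos (Bint_pos hp₁ hq₁) _).ne'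
          (rpow_pos_of_pos (Bint_pos hp₂ hq₂) _).ne',
          Real.log_rpow (Bint_pos hp₁ hq₁), Real.log_rpow (Bint_pos hp₂ hq₂)]

lemma term_le {p₁ q₁ p₂ q₂ a b : ℝ} (hp₁ : 0 < p₁) (hq₁ : 0 < q₁) (hp₂ : 0 < p₂)
    (hq₂ : 0 < q₂) (ha : 0 < a) (hb : 0 < b) (hab : a + b = 1) :
    Real.log (Real.Gamma (a*p₁+b*p₂)) + Real.log (Real.Gamma (a*q₁+b*q₂))
        - Real.log (Real.Gamma (a*p₁+b*p₂ + (a*q₁+b*q₂)))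
      ≤ a * (Real.log (Real.Gamma p₁) + Real.log (Real.Gamma q₁)
          - Real.log (Real.Gamma (p₁+q₁)))
        + b * (Real.log (Real.Gamma p₂) + Real.log (Real.Gamma q₂)
          - Real.log (Real.Gamma (p₂+q₂))) := by
  by_cases h : p₁ = p₂ ∧ q₁ = q₂
  · obtain ⟨h1, h2⟩ := h
    rw [h1, h2, show a*p₂+b*p₂ = p₂ by linear_combination p₂ * hab,
      show a*q₂+b*q₂ = q₂ by linear_combination q₂ * hab]
    refine le_of_eq ?_
    linear_combination (- (Real.log (Real.Gamma p₂) + Real.log (Real.Gamma q₂)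
      - Real.log (Real.Gamma (p₂+q₂)))) * hab
  · exact (term_lt hp₁ hq₁ hp₂ hq₂ ha hb hab h).le

noncomputable def Qsum (γ : ℕ → ℝ) (m : ℕ) : ℝ := ∑ i ∈ Finset.range (m+1), γ i

lemma tele (γ : ℕ → ℝ) (N : ℕ) :
    (∑ k ∈ Finset.range (N+1), Real.log (Real.Gamma (γ k)))
      - Real.log (Real.Gamma (Qsum γ N))
    = ∑ m ∈ Finset.range N, (Real.log (Real.Gamma (Qsum γ m))
        + Real.log (Real.Gamma (γ (m+1))) - Real.log (Real.Gamma (Qsum γ (m+1)))) := by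
  induction N with
  | zero => simp [Qsum]
  | succ n ih =>
    rw [Finset.sum_range_succ
        (f := fun m => Real.log (Real.Gamma (Qsum γ m)) + Real.log (Real.Gamma (γ (m+1)))
          - Real.log (Real.Gamma (Qsum γ (m+1)))), ← ih,
      Finset.sum_range_succ (f := fun k => Real.log (Real.Gamma (γ k)))]
    ring

lemma F_strict {K : ℕ} (hK : 2 ≤ K) {u v : Fin K → ℝ} (hu : ∀ k, 0 < u k)
    (hv : ∀ k, 0 < v k) (huv : u ≠ v) {a b : ℝ} (ha : 0 < a) (hb : 0 < b)
    (hab : a + b = 1) :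
    (∑ k, Real.log (Real.Gamma (a * u k + b * v k)))
        - Real.log (Real.Gamma (∑ k, (a * u k + b * v k)))
      < a * ((∑ k, Real.log (Real.Gamma (u k))) - Real.log (Real.Gamma (∑ k, u k)))
        + b * ((∑ k, Real.log (Real.Gamma (v k))) - Real.log (Real.Gamma (∑ k, v k))) := by
  obtain ⟨N, rfl⟩ : ∃ N, K = N + 1 := ⟨K - 1, by omega⟩
  have hN : 1 ≤ N := by omega
  set γu : ℕ → ℝ := fun i => if h : i < N + 1 then u ⟨i, h⟩ else 1 with hγu
  set γv : ℕ → ℝ := fun i => if h : i < N + 1 then v ⟨i, h⟩ else 1 with hγv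
  set γm : ℕ → ℝ := fun i => if h : i < N + 1 then a * u ⟨i, h⟩ + b * v ⟨i, h⟩ else 1 with hγm
  have hγmlin : ∀ i, γm i = a * γu i + b * γv i := by
    intro i
    simp only [hγu, hγv, hγm]
    split_ifs with h
    · rfl
    · linarith
  have hγupos : ∀ i, 0 < γu i := by
    intro i; simp only [hγu]; split_ifs with h
    exacts [hu _, one_pos]
  have hγvpos : ∀ i, 0 < γv i := by
    intro i; simp only [hγv]; split_ifs with h
    exacts [hv _, one_pos]
  have cu1 : (∑ k : Fin (N+1), Real.log (Real.Gamma (u k)))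
      = ∑ k ∈ Finset.range (N+1), Real.log (Real.Gamma (γu k)) := by
    rw [← Fin.sum_univ_eq_sum_range (fun i => Real.log (Real.Gamma (γu i))) (N+1)]
    exact Finset.sum_congr rfl fun i _ => by simp [hγu, i.isLt, Fin.is_le i]
  have cu2 : (∑ k : Fin (N+1), u k) = Qsum γu N := by
    rw [Qsum, ← Fin.sum_univ_eq_sum_range (fun i => γu i) (N+1)]
    exact Finset.sum_congr rfl fun i _ => by simp [hγu, i.isLt, Fin.is_le i]
  have cv1 : (∑ k : Fin (N+1), Real.log (Real.Gamma (v k)))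
      = ∑ k ∈ Finset.range (N+1), Real.log (Real.Gamma (γv k)) := by
    rw [← Fin.sum_univ_eq_sum_range (fun i => Real.log (Real.Gamma (γv i))) (N+1)]
    exact Finset.sum_congr rfl fun i _ => by simp [hγv, i.isLt, Fin.is_le i]
  have cv2 : (∑ k : Fin (N+1), v k) = Qsum γv N := by
    rw [Qsum, ← Fin.sum_univ_eq_sum_range (fun i => γv i) (N+1)]
    exact Finset.sum_congr rfl fun i _ => by simp [hγv, i.isLt, Fin.is_le i]
  have cm1 : (∑ k : Fin (N+1), Real.log (Real.Gamma (a * u k + b * v k)))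
      = ∑ k ∈ Finset.range (N+1), Real.log (Real.Gamma (γm k)) := by
    rw [← Fin.sum_univ_eq_sum_range (fun i => Real.log (Real.Gamma (γm i))) (N+1)]
    exact Finset.sum_congr rfl fun i _ => by simp [hγm, i.isLt, Fin.is_le i]
  have cm2 : (∑ k : Fin (N+1), (a * u k + b * v k)) = Qsum γm N := by
    rw [Qsum, ← Fin.sum_univ_eq_sum_range (fun i => γm i) (N+1)]
    exact Finset.sum_congr rfl fun i _ => by simp [hγm, i.isLt, Fin.is_le i]
  rw [cm1, cm2, cu1, cu2, cv1, cv2, tele γm N, tele γu N, tele γv N,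
    Finset.mul_sum, Finset.mul_sum, ← Finset.sum_add_distrib]
  have hQu : ∀ m, 0 < Qsum γu m :=
    fun m => Finset.sum_pos (fun i _ => hγupos i) Finset.nonempty_range_add_one
  have hQv : ∀ m, 0 < Qsum γv m :=
    fun m => Finset.sum_pos (fun i _ => hγvpos i) Finset.nonempty_range_add_one
  have hQlin : ∀ m, Qsum γm m = a * Qsum γu m + b * Qsum γv m := by
    intro m
    rw [Qsum, Qsum, Qsum, Finset.mul_sum, Finset.mul_sum, ← Finset.sum_add_distrib]
    exact Finset.sum_congr rfl fun i _ => hγmlin i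
  have hQsucc : ∀ (γ : ℕ → ℝ) m, Qsum γ (m+1) = Qsum γ m + γ (m+1) := by
    intro γ m; rw [Qsum, Qsum, Finset.sum_range_succ]
  have hterm_le : ∀ m ∈ Finset.range N,
      Real.log (Real.Gamma (Qsum γm m)) + Real.log (Real.Gamma (γm (m+1)))
          - Real.log (Real.Gamma (Qsum γm (m+1)))
        ≤ a * (Real.log (Real.Gamma (Qsum γu m)) + Real.log (Real.Gamma (γu (m+1)))
            - Real.log (Real.Gamma (Qsum γu (m+1))))
          + b * (Real.log (Real.Gamma (Qsum γv m)) + Real.log (Real.Gamma (γv (m+1)))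
            - Real.log (Real.Gamma (Qsum γv (m+1)))) := by
    intro m _
    rw [hQsucc γm m, hQsucc γu m, hQsucc γv m, hQlin m, hγmlin (m+1)]
    exact term_le (hQu m) (hγupos (m+1)) (hQv m) (hγvpos (m+1)) ha hb hab
  refine Finset.sum_lt_sum hterm_le ?_
  -- find a strict index
  obtain ⟨k, hk⟩ := Function.ne_iff.1 huv
  rcases Nat.eq_zero_or_eq_succ_pred (k : ℕ) with h0 | hsucc
  · refine ⟨0, Finset.mem_range.2 (by omega), ?_⟩
    have hkeq : k = ⟨0, by omega⟩ := Fin.ext (by simp [h0])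
    have hne : ¬(Qsum γu 0 = Qsum γv 0 ∧ γu 1 = γv 1) := by
      rintro ⟨h1, -⟩
      apply hk
      have e1 : Qsum γu 0 = u k := by
        rw [Qsum, Finset.sum_range_one, hkeq]; simp [hγu]
      have e2 : Qsum γv 0 = v k := by
        rw [Qsum, Finset.sum_range_one, hkeq]; simp [hγv]
      rw [← e1, ← e2, h1]
    rw [hQsucc γm 0, hQsucc γu 0, hQsucc γv 0, hQlin 0, hγmlin 1]
    exact term_lt (hQu 0) (hγupos 1) (hQv 0) (hγvpos 1) ha hb hab hne
  · set j := (k : ℕ) - 1 with hj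
    have hkj : (k : ℕ) = j + 1 := by omega
    refine ⟨j, Finset.mem_range.2 (by omega), ?_⟩
    have hjlt : j + 1 < N + 1 := by have := k.isLt; omega
    have hkeq : k = ⟨j + 1, hjlt⟩ := Fin.ext (by simp [hkj])
    have hne : ¬(Qsum γu j = Qsum γv j ∧ γu (j+1) = γv (j+1)) := by
      rintro ⟨-, h2⟩
      apply hk
      have e1 : γu (j+1) = u k := by rw [hkeq]; simp [hγu, hjlt, (by omega : j + 1 ≤ N), (by omega : j < N)]
      have e2 : γv (j+1) = v k := by rw [hkeq]; simp [hγv, hjlt, (by omega : j + 1 ≤ N), (by omega : j < N)]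
      rw [← e1, ← e2, h2]
    rw [hQsucc γm j, hQsucc γu j, hQsucc γv j, hQlin j, hγmlin (j+1)]
    exact term_lt (hQu j) (hγupos (j+1)) (hQv j) (hγvpos (j+1)) ha hb hab hne

open Matrix

/-- The Dirichlet loglikelihood for `n ≥ 1` i.i.d. observations is strictly
concave on the parameter space `{α : ∀ k, αₖ > 0}`. -/
theorem dirichlet_loglik_strictConcave {n K : ℕ} (hn : 1 ≤ n) (hK : 2 ≤ K)
    (y : Fin n → Fin K → ℝ) :
    StrictConcaveOn ℝ {α : Fin K → ℝ | ∀ k, 0 < α k}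
      (fun α =>
        (n : ℝ) * Real.log (Real.Gamma (∑ k, α k)) -
          (n : ℝ) * ∑ k, Real.log (Real.Gamma (α k)) +
          ∑ k, (α k - 1) * ∑ r, Real.log (y r k)) := by
  constructor
  · intro p hp q hq a b ha hb hab
    intro k
    simp only [Pi.add_apply, Pi.smul_apply, smul_eq_mul]
    rcases eq_or_lt_of_le ha with h | h
    · have hb1 : b = 1 := by linarith
      simpa [← h, hb1] using hq k
    · nlinarith [mul_pos h (hp k), mul_nonneg hb (hq k).le]
  · intro u hu v hv huv a b ha hb hab
    have hF := F_strict hK hu hv huv ha hb hab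
    have hn0 : (0 : ℝ) < n := by
      have : 0 < n := hn
      exact_mod_cast this
    have key := mul_lt_mul_of_pos_left hF hn0
    simp only [Pi.add_apply, Pi.smul_apply, smul_eq_mul]
    have hL : (∑ k, ((a * u k + b * v k) - 1) * ∑ r, Real.log (y r k))
        = a * (∑ k, (u k - 1) * ∑ r, Real.log (y r k))
          + b * (∑ k, (v k - 1) * ∑ r, Real.log (y r k)) := by
      rw [Finset.mul_sum, Finset.mul_sum, ← Finset.sum_add_distrib]
      refine Finset.sum_congr rfl fun k _ => ?_
      linear_combination (∑ r, Real.log (y r k)) * hab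
    nlinarith [key, hL]
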